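/- Let ρ ∈ L¹(ℝ³) with ρ ≥ 0 a.e. and ∫_{ℝ³} ρ = N for an integer N ≥ 4, and let ξ : ℝ → (0,1) be continuous, strictly increasing, with lim_{x→−∞} ξ(x) = 0 and lim_{x→+∞} ξ(x) = 1. Then there exist α, β, γ ∈ ℝ such that, setting η₁(r) := (2/N) ξ(r₁ + α), η₂(r) := (2/(N−1)) ξ(r₁ + β)(1 − η₁(r)), and η₃(r) := (2/(N−2)) ξ(r₂ + γ)(1 − η₁(r) − η₂(r)), one has ∫_{ℝ³} η₁ ρ = ∫_{ℝ³} η₂ ρ = ∫_{ℝ³} η₃ ρ = 1; consequently, with η_k := (1/(N−3))(1 − η₁ − η₂ − η₃) for 4 ≤ k ≤ N, one has ∫_{ℝ³} η_k ρ = 1 for every 1 ≤ k ≤ N. -/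

import Mathlib

open MeasureTheory Filter

noncomputable section

abbrev R3 : Type := EuclideanSpace ℝ (Fin 3)

lemma stmt17_integ (ξ : ℝ → ℝ) (hξc : Continuous ξ)
    (hξ01 : ∀ t, ξ t ∈ Set.Ioo (0 : ℝ) 1)
    (g : R3 → ℝ) (hgi : Integrable g volume) (i : Fin 3) (α : ℝ) :
    Integrable (fun x : R3 => ξ (x i + α) * g x) volume := by
  refine hgi.bdd_mul (c := 1) ((hξc.comp ((by fun_prop : Continuous fun x : R3 => x i).add continuous_const)).aestronglyMeasurable)
    (Eventually.of_forall fun x => ?_)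
  have h := hξ01 (x i + α)
  rw [Real.norm_eq_abs, abs_of_pos h.1]
  exact h.2.le

/-- Key lemma: tune the shift so the integral hits any value in `(0, ∫ g)`. -/
lemma stmt17_key (ξ : ℝ → ℝ) (hξc : Continuous ξ)
    (hξ01 : ∀ t, ξ t ∈ Set.Ioo (0 : ℝ) 1)
    (hbot : Tendsto ξ atBot (nhds 0)) (htop : Tendsto ξ atTop (nhds 1))
    (g : R3 → ℝ) (hgi : Integrable g volume)
    (hg0 : ∀ᵐ x ∂(volume : Measure R3), 0 ≤ g x)
    (i : Fin 3) (c : ℝ) (hc0 : 0 < c) (hcM : c < ∫ x, g x) :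
    ∃ α : ℝ, (∫ x, ξ (x i + α) * g x) = c := by
  set F : ℝ → ℝ := fun α => ∫ x, ξ (x i + α) * g x with hF
  have hmeas : ∀ α : ℝ, AEStronglyMeasurable (fun x : R3 => ξ (x i + α) * g x) volume :=
    fun α => (stmt17_integ ξ hξc hξ01 g hgi i α).aestronglyMeasurable
  have hbound : ∀ α : ℝ, ∀ᵐ x ∂(volume : Measure R3), ‖ξ (x i + α) * g x‖ ≤ |g x| := by
    intro α
    filter_upwards with x
    have h := hξ01 (x i + α)
    rw [Real.norm_eq_abs, abs_mul, abs_of_pos h.1]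
    nlinarith [abs_nonneg (g x), h.2]
  have hibound : Integrable (fun x : R3 => |g x|) volume := hgi.abs
  have hFcont : Continuous F := by
    refine continuous_of_dominated hmeas hbound hibound ?_
    filter_upwards with x
    exact (hξc.comp (continuous_const.add continuous_id)).mul continuous_const
  have htend_top : Tendsto F atTop (nhds (∫ x, g x)) := by
    refine tendsto_integral_filter_of_dominated_convergence (fun x => |g x|)
      (Eventually.of_forall hmeas) (Eventually.of_forall hbound) hibound ?_
    filter_upwards with x
    have h1 : Tendsto (fun α : ℝ => x i + α) atTop atTop :=
      tendsto_atTop_add_const_left atTop (x i) tendsto_id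
    have := (htop.comp h1).mul_const (g x)
    simpa using this
  have htend_bot : Tendsto F atBot (nhds (∫ x : R3, (0:ℝ) * g x)) := by
    refine tendsto_integral_filter_of_dominated_convergence (fun x => |g x|)
      (Eventually.of_forall hmeas) (Eventually.of_forall hbound) hibound ?_
    filter_upwards with x
    have h1 : Tendsto (fun α : ℝ => x i + α) atBot atBot :=
      tendsto_atBot_add_const_left atBot (x i) tendsto_id
    exact (hbot.comp h1).mul_const (g x)
  have hzero : (∫ x : R3, (0:ℝ) * g x) = 0 := by simp
  rw [hzero] at htend_bot
  have he1 : ∀ᶠ α in atBot, F α < c := htend_bot.eventually_lt_const hc0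
  have he2 : ∀ᶠ α in atTop, c < F α := htend_top.eventually_const_lt hcM
  obtain ⟨a, ha⟩ := he1.exists
  obtain ⟨b, hb, hab⟩ := (he2.and (eventually_ge_atTop a)).exists
  obtain ⟨α, -, hα⟩ := intermediate_value_Icc hab hFcont.continuousOn ⟨ha.le, hb.le⟩
  exact ⟨α, hα⟩

/-- normalization of the partition of unity. Given a density
`ρ ≥ 0` of total mass `N ≥ 4` and a continuous strictly increasing sigmoid
`ξ : ℝ → (0,1)`, the shifts `α, β, γ` can be tuned so that each `η_k ρ`
(`1 ≤ k ≤ N`) carries unit mass. -/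
theorem stmt17 (N : ℕ) (hN : 4 ≤ N) (ρ : R3 → ℝ)
    (hρi : Integrable ρ volume)
    (hρ0 : ∀ᵐ x ∂(volume : Measure R3), 0 ≤ ρ x)
    (hρN : (∫ x, ρ x) = (N : ℝ))
    (ξ : ℝ → ℝ) (hξc : Continuous ξ) (hξm : StrictMono ξ)
    (hξ01 : ∀ t, ξ t ∈ Set.Ioo (0 : ℝ) 1)
    (hbot : Tendsto ξ atBot (nhds 0)) (htop : Tendsto ξ atTop (nhds 1)) :
    ∃ α β γ : ℝ, ∃ η₁ η₂ η₃ : R3 → ℝ,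
      η₁ = (fun x => 2 / (N : ℝ) * ξ (x 0 + α)) ∧
      η₂ = (fun x => 2 / ((N : ℝ) - 1) * ξ (x 0 + β) * (1 - η₁ x)) ∧
      η₃ = (fun x => 2 / ((N : ℝ) - 2) * ξ (x 1 + γ) * (1 - η₁ x - η₂ x)) ∧
      (∫ x, η₁ x * ρ x) = 1 ∧ (∫ x, η₂ x * ρ x) = 1 ∧ (∫ x, η₃ x * ρ x) = 1 ∧
      (∫ x, 1 / ((N : ℝ) - 3) * (1 - η₁ x - η₂ x - η₃ x) * ρ x) = 1 := by
  have hN4 : (4:ℝ) ≤ (N:ℝ) := by exact_mod_cast hN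
  -- step 1
  obtain ⟨α, hα⟩ := stmt17_key ξ hξc hξ01 hbot htop ρ hρi hρ0 0 ((N:ℝ)/2)
    (by linarith) (by rw [hρN]; linarith)
  set η₁ : R3 → ℝ := fun x => 2 / (N : ℝ) * ξ (x 0 + α) with hη₁
  have hξb : ∀ t, 0 < ξ t ∧ ξ t < 1 := fun t => ⟨(hξ01 t).1, (hξ01 t).2⟩
  have hNne : (N:ℝ) ≠ 0 := by linarith
  have hη₁b : ∀ x, 0 < η₁ x ∧ η₁ x < 2 / (N:ℝ) := by
    intro x
    obtain ⟨h1, h2⟩ := hξb (x 0 + α)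
    have hc : 0 < 2 / (N:ℝ) := div_pos two_pos (by linarith)
    constructor
    · show 0 < 2 / (N:ℝ) * ξ (x 0 + α)
      exact mul_pos hc h1
    · show 2 / (N:ℝ) * ξ (x 0 + α) < 2 / (N:ℝ)
      nlinarith
  have h2N : 2 / (N:ℝ) ≤ 1/2 := by
    rw [div_le_div_iff₀ (by linarith) (by norm_num)]; linarith
  have hη₁le : ∀ x, η₁ x < 1 := fun x => by linarith [(hη₁b x).2]
  have hI1 : (∫ x, η₁ x * ρ x) = 1 := by
    have h : (fun x => η₁ x * ρ x) = fun x => 2/(N:ℝ) * (ξ (x 0 + α) * ρ x) := by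
      funext x; show 2 / (N:ℝ) * ξ (x 0 + α) * ρ x = _; ring
    rw [h, integral_const_mul, hα,
      show (2:ℝ)/(N:ℝ) * ((N:ℝ)/2) = (N:ℝ)/(N:ℝ) by ring, div_self hNne]
  have hIη₁ρ : Integrable (fun x => η₁ x * ρ x) volume := by
    have h := (stmt17_integ ξ hξc hξ01 ρ hρi 0 α).const_mul (2/(N:ℝ))
    refine h.congr (Eventually.of_forall fun x => ?_)
    show 2 / (N:ℝ) * (ξ (x 0 + α) * ρ x) = 2 / (N:ℝ) * ξ (x 0 + α) * ρ x
    ring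
  -- step 2
  set g₂ : R3 → ℝ := fun x => (1 - η₁ x) * ρ x with hg₂
  have hg₂i : Integrable g₂ volume := by
    have h : g₂ = fun x => ρ x - η₁ x * ρ x := by funext x; show (1 - η₁ x) * ρ x = _; ring
    rw [h]; exact hρi.sub hIη₁ρ
  have hg₂0 : ∀ᵐ x ∂(volume : Measure R3), 0 ≤ g₂ x := by
    filter_upwards [hρ0] with x hx
    exact mul_nonneg (by linarith [hη₁le x]) hx
  have hg₂int : (∫ x, g₂ x) = (N:ℝ) - 1 := by
    have h : (∫ x, g₂ x) = ∫ x, (ρ x - η₁ x * ρ x) := by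
      congr 1; funext x; show (1 - η₁ x) * ρ x = _; ring
    rw [h, integral_sub hρi hIη₁ρ, hρN, hI1]
  obtain ⟨β, hβ⟩ := stmt17_key ξ hξc hξ01 hbot htop g₂ hg₂i hg₂0 0 (((N:ℝ)-1)/2)
    (by linarith) (by rw [hg₂int]; linarith)
  set η₂ : R3 → ℝ := fun x => 2 / ((N : ℝ) - 1) * ξ (x 0 + β) * (1 - η₁ x) with hη₂
  have hN1ne : (N:ℝ) - 1 ≠ 0 := by intro h; linarith
  have hη₂b : ∀ x, 0 < η₂ x ∧ η₁ x + η₂ x < 1 := by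
    intro x
    obtain ⟨h1, h2⟩ := hξb (x 0 + β)
    have h3 := hη₁le x
    have h4 := (hη₁b x).1
    have h5 : 0 < 2 / ((N:ℝ) - 1) := div_pos two_pos (by linarith)
    have h6 : 2 / ((N:ℝ) - 1) ≤ 2/3 := by
      rw [div_le_div_iff₀ (by linarith) (by norm_num)]; linarith
    have hs : 0 < 1 - η₁ x := by linarith
    have hcξ : 2/((N:ℝ)-1) * ξ (x 0 + β) < 1 := by nlinarith
    have hkey : η₂ x = (2/((N:ℝ)-1) * ξ (x 0 + β)) * (1 - η₁ x) := rfl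
    constructor
    · rw [hkey]; exact mul_pos (mul_pos h5 h1) hs
    · have := mul_lt_of_lt_one_left hs hcξ
      rw [← hkey] at this
      linarith
  have hI2 : (∫ x, η₂ x * ρ x) = 1 := by
    have h : (fun x => η₂ x * ρ x) = fun x => 2/((N:ℝ)-1) * (ξ (x 0 + β) * g₂ x) := by
      funext x
      show 2 / ((N:ℝ) - 1) * ξ (x 0 + β) * (1 - η₁ x) * ρ x
        = 2/((N:ℝ)-1) * (ξ (x 0 + β) * ((1 - η₁ x) * ρ x))
      ring
    rw [h, integral_const_mul, hβ,
      show (2:ℝ)/((N:ℝ)-1) * (((N:ℝ)-1)/2) = ((N:ℝ)-1)/((N:ℝ)-1) by ring, div_self hN1ne]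
  have hIη₂ρ : Integrable (fun x => η₂ x * ρ x) volume := by
    have h := (stmt17_integ ξ hξc hξ01 g₂ hg₂i 0 β).const_mul (2/((N:ℝ)-1))
    refine h.congr (Eventually.of_forall fun x => ?_)
    show 2/((N:ℝ)-1) * (ξ (x 0 + β) * ((1 - η₁ x) * ρ x))
      = 2 / ((N:ℝ) - 1) * ξ (x 0 + β) * (1 - η₁ x) * ρ x
    ring
  -- step 3
  set g₃ : R3 → ℝ := fun x => (1 - η₁ x - η₂ x) * ρ x with hg₃
  have hg₃i : Integrable g₃ volume := by
    have h : g₃ = fun x => g₂ x - η₂ x * ρ x := by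
      funext x
      show (1 - η₁ x - η₂ x) * ρ x = (1 - η₁ x) * ρ x - η₂ x * ρ x
      ring
    rw [h]; exact hg₂i.sub hIη₂ρ
  have hg₃0 : ∀ᵐ x ∂(volume : Measure R3), 0 ≤ g₃ x := by
    filter_upwards [hρ0] with x hx
    exact mul_nonneg (by linarith [(hη₂b x).2]) hx
  have hg₃int : (∫ x, g₃ x) = (N:ℝ) - 2 := by
    have h : (∫ x, g₃ x) = ∫ x, (g₂ x - η₂ x * ρ x) := by
      congr 1; funext x
      show (1 - η₁ x - η₂ x) * ρ x = (1 - η₁ x) * ρ x - η₂ x * ρ x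
      ring
    rw [h, integral_sub hg₂i hIη₂ρ, hg₂int, hI2]; ring
  obtain ⟨γ, hγ⟩ := stmt17_key ξ hξc hξ01 hbot htop g₃ hg₃i hg₃0 1 (((N:ℝ)-2)/2)
    (by linarith) (by rw [hg₃int]; linarith)
  set η₃ : R3 → ℝ := fun x => 2 / ((N : ℝ) - 2) * ξ (x 1 + γ) * (1 - η₁ x - η₂ x) with hη₃
  have hN2ne : (N:ℝ) - 2 ≠ 0 := by intro h; linarith
  have hη₃b : ∀ x, 0 ≤ η₃ x ∧ η₁ x + η₂ x + η₃ x ≤ 1 := by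
    intro x
    obtain ⟨h1, h2⟩ := hξb (x 1 + γ)
    have h3 := (hη₂b x).2
    have hs : (0:ℝ) < 1 - η₁ x - η₂ x := by linarith
    have h5 : 0 < 2 / ((N:ℝ) - 2) := div_pos two_pos (by linarith)
    have h6 : 2 / ((N:ℝ) - 2) ≤ 1 := by
      rw [div_le_one (by linarith)]; linarith
    have hcξ : 2/((N:ℝ)-2) * ξ (x 1 + γ) < 1 := by nlinarith
    have hkey : η₃ x = (2/((N:ℝ)-2) * ξ (x 1 + γ)) * (1 - η₁ x - η₂ x) := rfl
    constructor
    · rw [hkey]; exact le_of_lt (mul_pos (mul_pos h5 h1) hs)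
    · have := mul_lt_of_lt_one_left hs hcξ
      rw [← hkey] at this
      linarith
  have hI3 : (∫ x, η₃ x * ρ x) = 1 := by
    have h : (fun x => η₃ x * ρ x) = fun x => 2/((N:ℝ)-2) * (ξ (x 1 + γ) * g₃ x) := by
      funext x
      show 2 / ((N:ℝ) - 2) * ξ (x 1 + γ) * (1 - η₁ x - η₂ x) * ρ x
        = 2/((N:ℝ)-2) * (ξ (x 1 + γ) * ((1 - η₁ x - η₂ x) * ρ x))
      ring
    rw [h, integral_const_mul, hγ,
      show (2:ℝ)/((N:ℝ)-2) * (((N:ℝ)-2)/2) = ((N:ℝ)-2)/((N:ℝ)-2) by ring, div_self hN2ne]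
  have hIη₃ρ : Integrable (fun x => η₃ x * ρ x) volume := by
    have h := (stmt17_integ ξ hξc hξ01 g₃ hg₃i 1 γ).const_mul (2/((N:ℝ)-2))
    refine h.congr (Eventually.of_forall fun x => ?_)
    show 2/((N:ℝ)-2) * (ξ (x 1 + γ) * ((1 - η₁ x - η₂ x) * ρ x))
      = 2 / ((N:ℝ) - 2) * ξ (x 1 + γ) * (1 - η₁ x - η₂ x) * ρ x
    ring
  -- final
  have hN3ne : (N:ℝ) - 3 ≠ 0 := by intro h; linarith
  refine ⟨α, β, γ, η₁, η₂, η₃, rfl, rfl, rfl, hI1, hI2, hI3, ?_⟩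
  have hrw : (fun x => 1 / ((N : ℝ) - 3) * (1 - η₁ x - η₂ x - η₃ x) * ρ x)
      = fun x => 1/((N:ℝ)-3) * (g₃ x - η₃ x * ρ x) := by
    funext x
    show 1 / ((N : ℝ) - 3) * (1 - η₁ x - η₂ x - η₃ x) * ρ x
      = 1/((N:ℝ)-3) * ((1 - η₁ x - η₂ x) * ρ x - η₃ x * ρ x)
    ring
  rw [hrw, integral_const_mul, integral_sub hg₃i hIη₃ρ, hg₃int, hI3,
    show (1:ℝ)/((N:ℝ)-3) * (((N:ℝ)-2) - 1) = ((N:ℝ)-3)/((N:ℝ)-3) by ring, div_self hN3ne]
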